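/- Let 1<p<∞, let I be an arc of the unit circle, and define φ_h(z) = (1/h)∫_{S_{I,h}} (1−|λ|²)^{p−1}/|1−conj(λ)z|^p dA(λ), where dA is planar area measure. There exists a constant C>0 depending only on p such that φ_h(z) ≤ C for every arc I, every h>0, and every z in the closed unit disk. -/

import Mathlib

open MeasureTheory Complex Set Metric

noncomputable section

/-- The `p`-th power mean of `f` on the circle of radius `r` (normalized by `2π`). -/
def hIntegral (p : ℝ) (f : ℂ → ℂ) (r : ℝ) : ℝ :=
  (1 / (2 * Real.pi)) *
    ∫ θ in (0:ℝ)..(2 * Real.pi), ‖f ((r : ℂ) * Complex.exp (θ * Complex.I))‖ ^ p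

/-- `‖f‖_p ^ p`, the `p`-th power of the Hardy space `H^p` norm. -/
def hNormPow (p : ℝ) (f : ℂ → ℂ) : ℝ := sSup (hIntegral p f '' Ioo (0:ℝ) 1)

/-- The Hardy space `H^p` norm. -/
def hNorm (p : ℝ) (f : ℂ → ℂ) : ℝ := hNormPow p f ^ (1 / p)

/-- `f` has finite `H^p` norm. -/
def HpFinite (p : ℝ) (f : ℂ → ℂ) : Prop := BddAbove (hIntegral p f '' Ioo (0:ℝ) 1)

/-- The `H^p` reproducing kernel `k_λ(z) = 1/(1 - conj(λ) z)`. -/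
def hker (l : ℂ) : ℂ → ℂ := fun z => 1 / (1 - (starRingEnd ℂ) l * z)

/-- The normalized reproducing kernel `K_λ = k_λ / ‖k_λ‖_p`. -/
def hkerN (p : ℝ) (l : ℂ) : ℂ → ℂ := fun z => hker l z / (hNorm p (hker l) : ℂ)

/-- The arc of the unit circle starting at angle `a` of normalized length `ℓ`. -/
def cArc (a ℓ : ℝ) : Set ℂ :=
  (fun θ : ℝ => Complex.exp (θ * Complex.I)) '' Ico a (a + 2 * Real.pi * ℓ)

/-- The modified Carleson window `S_{I,h}` over the arc of normalized length `ℓ`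
starting at angle `a`, with radial depth `h`. -/
def cWindowH (a ℓ h : ℝ) : Set ℂ :=
  {z : ℂ | 1 - h ≤ ‖z‖ ∧ ‖z‖ ≤ 1 ∧ z / (‖z‖ : ℂ) ∈ cArc a ℓ}

/-- The Carleson window `S_I`. -/
def cWindow (a ℓ : ℝ) : Set ℂ := cWindowH a ℓ ℓ

/-- Normalized Lebesgue (arclength over `2π`) measure on the unit circle `∂𝔻`. -/
def circM : Measure ℂ :=
  (ENNReal.ofReal (1 / (2 * Real.pi))) •
    Measure.map (fun θ : ℝ => Complex.exp (θ * Complex.I))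
      (volume.restrict (Ico (0:ℝ) (2 * Real.pi)))

end

noncomputable section
/-- `φ_h(z) = (1/h) ∫_{S_{I,h}} (1-|λ|²)^{p-1} / |1 - conj(λ) z|^p dA(λ)`, where `dA` is
planar area (Lebesgue) measure and `I` is the arc at angle `a` of normalized length `ℓ`. -/
def cPhi (p a ℓ h : ℝ) (z : ℂ) : ℝ :=
  (1 / h) * ∫ l in cWindowH a ℓ h,
    (1 - ‖l‖ ^ 2) ^ (p - 1) / ‖1 - (starRingEnd ℂ) l * z‖ ^ p
end



section AuxPhiBound
open MeasureTheory Complex Set Metric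

lemma arg_le_pi_mul_abs_one_sub {w : ℂ} (hw : ‖w‖ ≤ 1) :
    |Complex.arg w| ≤ Real.pi * ‖1 - w‖ := by
  rcases eq_or_ne w 0 with rfl | hw0
  · simp [Complex.arg_zero, Real.pi_pos.le]
  · set ψ := Complex.arg w with hψ
    set u : ℂ := Complex.exp (ψ * Complex.I) with hu
    have hπ := Real.pi_pos
    have hψpi : |ψ| ≤ Real.pi := Complex.abs_arg_le_pi w
    have hwu : (‖w‖ : ℂ) * u = w := Complex.norm_mul_exp_arg_mul_I w
    have hdiff : u - w = (1 - (‖w‖ : ℂ)) * u := by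
      conv_lhs => rw [← hwu]
      ring
    have huw : ‖u - w‖ = 1 - ‖w‖ := by
      rw [hdiff, norm_mul, Complex.norm_exp_ofReal_mul_I, mul_one]
      rw [show (1 : ℂ) - (‖w‖ : ℂ) = ((1 - ‖w‖ : ℝ) : ℂ) by push_cast; ring]
      rw [Complex.norm_real, Real.norm_eq_abs, _root_.abs_of_nonneg (by linarith)]
    have h1u : ‖1 - u‖ ^ 2 = 4 * Real.sin (ψ / 2) ^ 2 := by
      have hsq : Real.sin (ψ/2) ^ 2 = 1 / 2 - Real.cos (2 * (ψ/2)) / 2 :=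
        Real.sin_sq_eq_half_sub (ψ/2)
      rw [show 2 * (ψ/2) = ψ by ring] at hsq
      rw [Complex.sq_norm, hu, Complex.exp_mul_I]
      rw [show Complex.cos ψ = (Real.cos ψ : ℂ) from (Complex.ofReal_cos ψ).symm,
        show Complex.sin ψ = (Real.sin ψ : ℂ) from (Complex.ofReal_sin ψ).symm]
      rw [Complex.normSq_apply]
      simp only [Complex.sub_re, Complex.sub_im, Complex.one_re, Complex.one_im,
        Complex.add_re, Complex.add_im, Complex.mul_re, Complex.mul_im,
        Complex.ofReal_re, Complex.ofReal_im, Complex.I_re, Complex.I_im]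
      have := Real.sin_sq_add_cos_sq ψ
      nlinarith
    have hsin : (2 / Real.pi) * (|ψ| / 2) ≤ Real.sin (|ψ| / 2) :=
      Real.mul_le_sin (by positivity) (by linarith)
    have h1u' : 2 / Real.pi * |ψ| ≤ ‖1 - u‖ := by
      have h2 : Real.sin (|ψ|/2) ^ 2 = Real.sin (ψ/2) ^ 2 := by
        rcases abs_cases ψ with ⟨h, _⟩ | ⟨h, _⟩ <;> rw [h]
        · rw [show -ψ / 2 = -(ψ/2) by ring, Real.sin_neg]; ring
      have hnn : (0:ℝ) ≤ ‖1 - u‖ := norm_nonneg _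
      nlinarith [abs_nonneg ψ, Real.sin_nonneg_of_nonneg_of_le_pi
        (x := |ψ|/2) (by positivity) (by linarith)]
    have ht1 : ‖1 - u‖ ≤ ‖1 - w‖ + ‖w - u‖ := by
      calc ‖1 - u‖ = ‖(1 - w) + (w - u)‖ := by ring_nf
        _ ≤ _ := norm_add_le _ _
    have ht2 : 1 - ‖w‖ ≤ ‖1 - w‖ := by
      calc 1 - ‖w‖ = ‖(1:ℂ)‖ - ‖w‖ := by simp
        _ ≤ ‖1 - w‖ := norm_sub_norm_le _ _
        _ = ‖1 - w‖ := rfl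
    have hwu' : ‖w - u‖ = 1 - ‖w‖ := by
      rw [← huw, ← norm_neg]; ring_nf
    have hkey : 2 / Real.pi * |ψ| ≤ 2 * ‖1 - w‖ := by
      rw [hwu'] at ht1; linarith
    have h3 : 2 * |ψ| ≤ 2 * (Real.pi * ‖1 - w‖) := by
      calc 2 * |ψ| = Real.pi * (2 / Real.pi * |ψ|) := by field_simp
        _ ≤ Real.pi * (2 * ‖1 - w‖) :=
            mul_le_mul_of_nonneg_left hkey hπ.le
        _ = 2 * (Real.pi * ‖1 - w‖) := by ring
    linarith


lemma pointwise_bound {p : ℝ} (hp : 1 < p) {z : ℂ} (hz : ‖z‖ ≤ 1)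
    {r θ : ℝ} (hr : 0 < r) (hr1 : r ≤ 1) :
    (1 - ‖(r : ℂ) * Complex.exp ((θ : ℂ) * Complex.I)‖ ^ 2) ^ (p - 1) /
      ‖1 - (starRingEnd ℂ) ((r : ℂ) * Complex.exp ((θ : ℂ) * Complex.I)) * z‖ ^ p ≤
    2 ^ (p - 1) * (1 - r) ^ (p - 1) *
      (max (1 - r) (|Complex.arg (Complex.exp (((Complex.arg z : ℂ) - (θ : ℂ)) * Complex.I))| / Real.pi)) ^ (-p) := by
  have hπ := Real.pi_pos
  set lam : ℂ := (r : ℂ) * Complex.exp ((θ : ℂ) * Complex.I) with hlam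
  have habsL : ‖lam‖ = r := by
    rw [hlam, norm_mul, Complex.norm_real, Real.norm_eq_abs, Complex.norm_exp_ofReal_mul_I,
      mul_one, _root_.abs_of_pos hr]
  set w : ℂ := (starRingEnd ℂ) lam * z with hw
  have habsw : ‖w‖ = r * ‖z‖ := by
    rw [hw, norm_mul, Complex.norm_conj, habsL]
  have habsw1 : ‖w‖ ≤ 1 := by
    rw [habsw]; nlinarith [norm_nonneg z]
  set D := ‖1 - w‖ with hD
  set m := max (1 - r) (|Complex.arg (Complex.exp (((Complex.arg z : ℂ) - (θ : ℂ)) * Complex.I))| / Real.pi) with hm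
  -- D ≥ 1 - r
  have hD1 : 1 - r ≤ D := by
    calc 1 - r ≤ 1 - ‖w‖ := by
          rw [habsw]; nlinarith [norm_nonneg z]
      _ = ‖(1:ℂ)‖ - ‖w‖ := by simp
      _ ≤ ‖1 - w‖ := norm_sub_norm_le _ _
      _ = D := rfl
  -- D ≥ arg term
  have hD2 : |Complex.arg (Complex.exp (((Complex.arg z : ℂ) - (θ : ℂ)) * Complex.I))| / Real.pi ≤ D := by
    rcases eq_or_ne z 0 with rfl | hz0
    · have : D = 1 := by rw [hD, hw]; simp
      rw [this]
      rw [div_le_one hπ]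
      exact Complex.abs_arg_le_pi _
    · have hargw : Complex.arg w = Complex.arg (Complex.exp (((Complex.arg z : ℂ) - (θ : ℂ)) * Complex.I)) := by
        have hconj : (starRingEnd ℂ) lam = (r : ℂ) * Complex.exp (-((θ : ℂ) * Complex.I)) := by
          rw [hlam, map_mul, Complex.conj_ofReal, ← Complex.exp_conj]
          congr 1
          simp [map_mul, Complex.conj_ofReal, Complex.conj_I]
        have hzdec : z = (‖z‖ : ℂ) * Complex.exp ((Complex.arg z : ℂ) * Complex.I) :=
          (Complex.norm_mul_exp_arg_mul_I z).symm
        have : w = ((r * ‖z‖ : ℝ) : ℂ) * Complex.exp (((Complex.arg z : ℂ) - (θ : ℂ)) * Complex.I) := by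
          rw [hw, hconj]
          conv_lhs => rw [hzdec]
          rw [Complex.ofReal_mul, mul_mul_mul_comm, ← Complex.exp_add]
          congr 1
          ring
        rw [this]
        exact Complex.arg_real_mul _ (mul_pos hr (norm_pos_iff.2 hz0))
      rw [← hargw]
      rw [div_le_iff₀ hπ]
      calc |Complex.arg w| ≤ Real.pi * ‖1 - w‖ := arg_le_pi_mul_abs_one_sub habsw1
        _ = D * Real.pi := by rw [hD]; ring
  -- nonnegativity facts
  have hm0 : 0 ≤ m := le_trans (by linarith) (le_max_left _ _)
  have hN0 : 0 ≤ 1 - ‖lam‖ ^ 2 := by rw [habsL]; nlinarith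
  rcases eq_or_lt_of_le hr1 with rfl | hrlt
  · -- r = 1
    have : (1 - ‖lam‖ ^ 2) = 0 := by rw [habsL]; ring
    rw [this, Real.zero_rpow (by linarith : p - 1 ≠ 0), zero_div]
    have : (1 - (1:ℝ)) ^ (p - 1) = 0 := by
      rw [sub_self, Real.zero_rpow (by linarith : p - 1 ≠ 0)]
    rw [this, mul_zero, zero_mul]
  · -- r < 1
    have hmpos : 0 < m := lt_of_lt_of_le (by linarith) (le_max_left _ _)
    have hDpos : 0 < D := lt_of_lt_of_le hmpos (max_le hD1 hD2)
    have hmD : m ≤ D := max_le hD1 hD2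
    have hNle : (1 - ‖lam‖ ^ 2) ^ (p - 1) ≤ 2 ^ (p - 1) * (1 - r) ^ (p - 1) := by
      rw [← Real.mul_rpow (by norm_num) (by linarith)]
      apply Real.rpow_le_rpow hN0 _ (by linarith)
      rw [habsL]; nlinarith
    calc (1 - ‖lam‖ ^ 2) ^ (p - 1) / D ^ p
        ≤ (1 - ‖lam‖ ^ 2) ^ (p - 1) / m ^ p := by
          apply div_le_div_of_nonneg_left (Real.rpow_nonneg hN0 _)
            (Real.rpow_pos_of_pos hmpos _)
          exact Real.rpow_le_rpow hm0 hmD (by linarith)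
      _ = (1 - ‖lam‖ ^ 2) ^ (p - 1) * m ^ (-p) := by
          rw [Real.rpow_neg hm0, div_eq_mul_inv]
      _ ≤ 2 ^ (p - 1) * (1 - r) ^ (p - 1) * m ^ (-p) := by
          apply mul_le_mul_of_nonneg_right hNle (Real.rpow_nonneg hm0 _)


-- |arg(exp(θ i))| = |θ| on [-π, π]
lemma abs_arg_exp_eq {θ : ℝ} (h1 : -Real.pi ≤ θ) (h2 : θ ≤ Real.pi) :
    |Complex.arg (Complex.exp ((θ : ℂ) * Complex.I))| = |θ| := by
  rcases eq_or_lt_of_le h1 with rfl | h1'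
  · -- θ = -π
    have : Complex.exp (((-Real.pi : ℝ) : ℂ) * Complex.I) = -1 := by
      push_cast
      rw [neg_mul, Complex.exp_neg, Complex.exp_pi_mul_I]
      norm_num
    rw [this, Complex.arg_neg_one, abs_neg]
  · have h3 : toIocMod (mul_pos two_pos Real.pi_pos) (-Real.pi) θ = θ :=
      (toIocMod_eq_self _).2 (Set.mem_Ioc.2 ⟨h1', by linarith⟩)
    rw [Complex.arg_exp_mul_I, h3]

open intervalIntegral in
lemma inner_integral_bound {p : ℝ} (hp : 1 < p) {δ : ℝ} (hδ0 : 0 < δ) (hδ1 : δ ≤ 1) (c : ℝ) :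
    ∫ θ in Ioo (-Real.pi) Real.pi,
        (max δ (|Complex.arg (Complex.exp (((c : ℂ) - (θ : ℂ)) * Complex.I))| / Real.pi)) ^ (-p) ≤
      2 * Real.pi * (p / (p - 1)) * δ ^ (1 - p) := by
  have hπ := Real.pi_pos
  set F : ℝ → ℝ := fun ψ => (max δ (|Complex.arg (Complex.exp ((ψ : ℂ) * Complex.I))| / Real.pi)) ^ (-p) with hF
  set G : ℝ → ℝ := fun θ => (max δ (|θ| / Real.pi)) ^ (-p) with hG
  have hGcont : Continuous G := by
    apply Continuous.rpow_const
    · exact continuous_const.max ((continuous_abs.div_const _))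
    · intro x
      left
      have : 0 < max δ (|x| / Real.pi) := lt_of_lt_of_le hδ0 (le_max_left _ _)
      exact this.ne'
  -- step 1 : the integrand is F (c - θ)
  have hstep1 : ∀ θ : ℝ,
      (max δ (|Complex.arg (Complex.exp (((c : ℂ) - (θ : ℂ)) * Complex.I))| / Real.pi)) ^ (-p)
        = F (c - θ) := by
    intro θ; rw [hF]; push_cast; ring_nf
  -- convert Ioo integral to interval integral
  have hIoo : ∫ θ in Ioo (-Real.pi) Real.pi,
      (max δ (|Complex.arg (Complex.exp (((c : ℂ) - (θ : ℂ)) * Complex.I))| / Real.pi)) ^ (-p)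
      = ∫ θ in (-Real.pi)..Real.pi, F (c - θ) := by
    rw [intervalIntegral.integral_of_le (by linarith)]
    rw [← MeasureTheory.integral_Ioc_eq_integral_Ioo]
    apply MeasureTheory.setIntegral_congr_fun measurableSet_Ioc
    intro θ _
    exact hstep1 θ
  -- periodicity
  have hFper : Function.Periodic F (2 * Real.pi) := by
    intro x
    rw [hF]
    simp only
    congr 2
    push_cast
    rw [add_mul, Complex.exp_add]
    rw [show ((2:ℂ) * Real.pi) * Complex.I = 2 * Real.pi * Complex.I by ring,
      Complex.exp_two_pi_mul_I, mul_one]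
  have hshift : ∫ θ in (-Real.pi)..Real.pi, F (c - θ) = ∫ θ in (-Real.pi)..Real.pi, F θ := by
    rw [intervalIntegral.integral_comp_sub_left,
      show c - -Real.pi = c + Real.pi by ring]
    have := hFper.intervalIntegral_add_eq (c - Real.pi) (-Real.pi)
    rw [show c - Real.pi + 2 * Real.pi = c + Real.pi by ring,
      show -Real.pi + 2 * Real.pi = Real.pi by ring] at this
    exact this
  -- replace F by G on [-π, π]
  have hFG : ∫ θ in (-Real.pi)..Real.pi, F θ = ∫ θ in (-Real.pi)..Real.pi, G θ := by
    apply intervalIntegral.integral_congr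
    intro θ hθ
    rw [Set.uIcc_of_le (by linarith)] at hθ
    rw [hF, hG]
    simp only
    rw [abs_arg_exp_eq hθ.1 hθ.2]
  -- evenness: ∫_{-π}^{0} G = ∫_{0}^{π} G
  have heven : ∫ θ in (-Real.pi)..(0:ℝ), G θ = ∫ θ in (0:ℝ)..Real.pi, G θ := by
    have hGeven : ∀ x : ℝ, G (-x) = G x := by intro x; rw [hG]; simp [abs_neg]
    have h1 : ∫ θ in (-Real.pi)..(0:ℝ), G θ = ∫ θ in (-Real.pi)..(0:ℝ), G (-θ) := by
      apply intervalIntegral.integral_congr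
      intro θ _
      exact (hGeven θ).symm
    rw [h1, intervalIntegral.integral_comp_neg]
    norm_num
  have hsplit : ∫ θ in (-Real.pi)..Real.pi, G θ
      = (∫ θ in (-Real.pi)..(0:ℝ), G θ) + ∫ θ in (0:ℝ)..Real.pi, G θ := by
    rw [intervalIntegral.integral_add_adjacent_intervals
      (hGcont.intervalIntegrable _ _) (hGcont.intervalIntegrable _ _)]
  have hsplit2 : ∫ θ in (0:ℝ)..Real.pi, G θ
      = (∫ θ in (0:ℝ)..(δ * Real.pi), G θ) + ∫ θ in (δ * Real.pi)..Real.pi, G θ := by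
    rw [intervalIntegral.integral_add_adjacent_intervals
      (hGcont.intervalIntegrable _ _) (hGcont.intervalIntegrable _ _)]
  -- piece 1
  have hpiece1 : ∫ θ in (0:ℝ)..(δ * Real.pi), G θ = Real.pi * δ ^ (1 - p) := by
    have : ∀ θ ∈ Set.uIcc (0:ℝ) (δ * Real.pi), G θ = δ ^ (-p) := by
      intro θ hθ
      rw [Set.uIcc_of_le (by positivity)] at hθ
      rw [hG]
      simp only
      rw [_root_.abs_of_nonneg hθ.1]
      rw [max_eq_left ((div_le_iff₀ hπ).2 (by linarith [hθ.2]))]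
    rw [intervalIntegral.integral_congr this, intervalIntegral.integral_const]
    rw [smul_eq_mul, sub_zero]
    rw [show (1:ℝ) - p = 1 + (-p) by ring, Real.rpow_add hδ0, Real.rpow_one]
    ring
  -- piece 2
  have hpiece2 : ∫ θ in (δ * Real.pi)..Real.pi, G θ ≤ Real.pi * δ ^ (1 - p) / (p - 1) := by
    have hδπ : 0 < δ * Real.pi := by positivity
    have hcongr : ∀ θ ∈ Set.uIcc (δ * Real.pi) Real.pi, G θ = Real.pi ^ p * θ ^ (-p) := by
      intro θ hθ
      rw [Set.uIcc_of_le (by nlinarith)] at hθ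
      have hθ0 : 0 < θ := lt_of_lt_of_le hδπ hθ.1
      rw [hG]
      simp only
      rw [_root_.abs_of_pos hθ0]
      rw [max_eq_right ((le_div_iff₀ hπ).2 (by nlinarith [hθ.1]))]
      rw [Real.div_rpow hθ0.le hπ.le, Real.rpow_neg hπ.le, div_eq_mul_inv, inv_inv]
      ring
    rw [intervalIntegral.integral_congr hcongr, intervalIntegral.integral_const_mul]
    have hrpow : ∫ θ in (δ * Real.pi)..Real.pi, θ ^ (-p)
        = (Real.pi ^ (-p + 1) - (δ * Real.pi) ^ (-p + 1)) / (-p + 1) := by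
      apply integral_rpow
      right
      constructor
      · intro h; rw [neg_eq_iff_eq_neg] at h; linarith
      · rw [Set.uIcc_of_le (by nlinarith)]
        intro hmem
        exact absurd hmem.1 (by linarith)
    rw [hrpow]
    have hp1 : p - 1 ≠ 0 := by linarith
    have heq2 : (Real.pi ^ (-p + 1) - (δ * Real.pi) ^ (-p + 1)) / (-p + 1)
        = ((δ * Real.pi) ^ (-p + 1) - Real.pi ^ (-p + 1)) / (p - 1) := by
      rw [div_eq_div_iff (by linarith) (by linarith)]
      ring
    have hkey : ((δ * Real.pi) ^ (-p + 1) - Real.pi ^ (-p + 1)) / (p - 1)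
        ≤ (δ * Real.pi) ^ (-p + 1) / (p - 1) := by
      apply div_le_div_of_nonneg_right ?_ (by linarith)
      have : (0:ℝ) ≤ Real.pi ^ (-p + 1) := Real.rpow_nonneg hπ.le _
      linarith
    have hval : Real.pi ^ p * ((δ * Real.pi) ^ (-p + 1) / (p - 1))
        = Real.pi * δ ^ (1 - p) / (p - 1) := by
      rw [Real.mul_rpow hδ0.le hπ.le]
      rw [show (-p + 1 : ℝ) = 1 - p by ring, mul_div_assoc']
      rw [show Real.pi ^ p * (δ ^ (1-p) * Real.pi ^ (1-p))
        = (Real.pi ^ p * Real.pi ^ (1-p)) * δ ^ (1-p) by ring]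
      rw [← Real.rpow_add hπ]
      rw [show p + (1 - p) = (1:ℝ) by ring, Real.rpow_one]
    calc Real.pi ^ p * ((Real.pi ^ (-p + 1) - (δ * Real.pi) ^ (-p + 1)) / (-p + 1))
        ≤ Real.pi ^ p * ((δ * Real.pi) ^ (-p + 1) / (p - 1)) := by
          rw [heq2]
          exact mul_le_mul_of_nonneg_left hkey (Real.rpow_nonneg hπ.le _)
      _ = Real.pi * δ ^ (1 - p) / (p - 1) := hval
  -- assemble
  have hp1 : p - 1 ≠ 0 := by linarith
  calc ∫ θ in Ioo (-Real.pi) Real.pi,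
        (max δ (|Complex.arg (Complex.exp (((c : ℂ) - (θ : ℂ)) * Complex.I))| / Real.pi)) ^ (-p)
      = (∫ θ in (0:ℝ)..Real.pi, G θ) + ∫ θ in (0:ℝ)..Real.pi, G θ := by
        rw [hIoo, hshift, hFG, hsplit, heven]
    _ = 2 * ((∫ θ in (0:ℝ)..(δ * Real.pi), G θ) + ∫ θ in (δ * Real.pi)..Real.pi, G θ) := by
        rw [← hsplit2]; ring
    _ ≤ 2 * (Real.pi * δ ^ (1 - p) + Real.pi * δ ^ (1 - p) / (p - 1)) := by
        rw [hpiece1]; linarith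
    _ = 2 * Real.pi * (p / (p - 1)) * δ ^ (1 - p) := by
        field_simp
        ring


lemma measurable_cArc {a ℓ : ℝ} (hℓ : ℓ ≤ 1) : MeasurableSet (cArc a ℓ) := by
  apply MeasurableSet.image_of_continuousOn_injOn (measurableSet_Ico)
  · exact (Complex.continuous_exp.comp (Continuous.mul Complex.continuous_ofReal
      continuous_const)).continuousOn
  · intro x hx y hy hxy
    simp only at hxy
    rw [Complex.exp_eq_exp_iff_exists_int] at hxy
    obtain ⟨n, hn⟩ := hxy
    have hn' : (x : ℂ) = ((y + n * (2 * Real.pi) : ℝ) : ℂ) := by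
      have hI : ((x : ℂ) - (y + n * (2 * Real.pi) : ℝ)) * Complex.I = 0 := by
        push_cast
        push_cast at hn
        rw [sub_mul]
        rw [hn]
        ring
      rcases mul_eq_zero.1 hI with h | h
      · linear_combination h
      · exact absurd h Complex.I_ne_zero
    have hxy' : x = y + n * (2 * Real.pi) := by exact_mod_cast hn'
    have hπ := Real.pi_pos
    simp only [mem_Ico] at hx hy
    have hn0 : n = 0 := by
      rcases lt_trichotomy n 0 with h | h | h
      · exfalso
        have : (n : ℝ) ≤ -1 := by exact_mod_cast Int.le_sub_one_of_lt h
        nlinarith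
      · exact h
      · exfalso
        have : (1 : ℝ) ≤ (n : ℝ) := by exact_mod_cast h
        nlinarith
    rw [hn0] at hxy'
    simpa using hxy'

lemma measurable_cWindowH {a ℓ h : ℝ} (hℓ : ℓ ≤ 1) : MeasurableSet (cWindowH a ℓ h) := by
  have h1 : MeasurableSet {z : ℂ | 1 - h ≤ ‖z‖} :=
    measurableSet_le measurable_const continuous_norm.measurable
  have h2 : MeasurableSet {z : ℂ | ‖z‖ ≤ 1} :=
    measurableSet_le continuous_norm.measurable measurable_const
  have h3 : MeasurableSet {z : ℂ | z / (‖z‖ : ℂ) ∈ cArc a ℓ} := by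
    have hm : Measurable fun z : ℂ => z / (‖z‖ : ℂ) := by
      apply Measurable.div measurable_id
      exact Complex.measurable_ofReal.comp continuous_norm.measurable
    exact hm (measurable_cArc hℓ)
  have : cWindowH a ℓ h = {z : ℂ | 1 - h ≤ ‖z‖} ∩ ({z : ℂ | ‖z‖ ≤ 1}
      ∩ {z : ℂ | z / (‖z‖ : ℂ) ∈ cArc a ℓ}) := by
    ext z; simp [cWindowH, mem_setOf_eq, mem_inter_iff]
  rw [this]
  exact h1.inter (h2.inter h3)

lemma polarCoord_symm_eq (q : ℝ × ℝ) :
    Complex.polarCoord.symm q = (q.1 : ℂ) * Complex.exp ((q.2 : ℂ) * Complex.I) := by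
  rw [Complex.polarCoord_symm_apply, Complex.exp_mul_I]
  push_cast
  ring


set_option maxHeartbeats 1000000 in
/-- Uniform upper bound: there is `C > 0` depending only on `p` such that `φ_h(z) ≤ C`
for every arc `I`, every `h > 0` and every `z` in the closed unit disk. -/
theorem phi_uniform_upper_bound (p : ℝ) (hp : 1 < p) :
    ∃ C > (0:ℝ), ∀ a ℓ h : ℝ, 0 < ℓ → ℓ ≤ 1 → 0 < h →
      ∀ z ∈ closedBall (0:ℂ) 1, cPhi p a ℓ h z ≤ C := by
  have hπ := Real.pi_pos
  set K : ℝ := 2 ^ (p-1) * (2 * Real.pi * (p / (p - 1))) with hKdef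
  have hK0 : 0 < K := by
    apply mul_pos (Real.rpow_pos_of_pos two_pos _)
    exact mul_pos (by positivity) (div_pos (by linarith) (by linarith))
  refine ⟨K, hK0, ?_⟩
  intro a ℓ h hℓ0 hℓ1 hh z hz
  have hz1 : ‖z‖ ≤ 1 := by
    simpa [Complex.dist_eq] using (mem_closedBall.1 hz)
  set S := cWindowH a ℓ h with hSdef
  set g : ℂ → ℝ := fun l =>
    (1 - ‖l‖ ^ 2) ^ (p - 1) / ‖1 - (starRingEnd ℂ) l * z‖ ^ p with hgdef
  set s : Set ℝ := Ioi (0:ℝ) ∩ Icc (1-h) 1 with hsdef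
  set t : Set ℝ := Ioo (-Real.pi) Real.pi with htdef
  have hs : MeasurableSet s := measurableSet_Ioi.inter measurableSet_Icc
  have ht : MeasurableSet t := measurableSet_Ioo
  set κ : ℝ × ℝ → ℝ := fun q => 2 ^ (p-1) * (1 - q.1) ^ (p-1) *
    (max (1 - q.1)
      (|Complex.arg (Complex.exp (((Complex.arg z : ℂ) - (q.2 : ℂ)) * Complex.I))| / Real.pi)) ^ (-p)
    with hκdef
  set M : ℝ × ℝ → ℝ := (s ×ˢ t).indicator κ with hMdef
  -- nonnegativity of g on the closed disk
  have hgS : ∀ l : ℂ, ‖l‖ ≤ 1 → 0 ≤ g l := by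
    intro l hl
    apply div_nonneg (Real.rpow_nonneg ?_ _) (Real.rpow_nonneg (norm_nonneg _) _)
    nlinarith [norm_nonneg l]
  -- nonnegativity of κ on s ×ˢ t
  have hκ_nonneg_on : ∀ q ∈ s ×ˢ t, 0 ≤ κ q := by
    intro q hq
    have hq1 : q.1 ≤ 1 := (Set.mem_prod.1 hq).1.2.2
    have h1q : 0 ≤ 1 - q.1 := by linarith
    apply mul_nonneg (mul_nonneg (Real.rpow_nonneg (by norm_num) _) (Real.rpow_nonneg h1q _))
    exact Real.rpow_nonneg (le_trans h1q (le_max_left _ _)) _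
  have hMnonneg : ∀ q, 0 ≤ M q := fun q => Set.indicator_nonneg hκ_nonneg_on q
  -- measurability
  have hrpneg : Measurable fun x : ℝ => x ^ (-p) := by fun_prop
  have hrp1 : Measurable fun x : ℝ => x ^ (p - 1) := by fun_prop
  have hargRaw : Measurable fun q : ℝ × ℝ =>
      Complex.arg (Complex.exp (((Complex.arg z : ℂ) - ((q.2 : ℝ) : ℂ)) * Complex.I)) := by
    apply Complex.measurable_arg.comp
    apply Continuous.measurable
    continuity
  have hargabs : Measurable fun q : ℝ × ℝ =>
      |Complex.arg (Complex.exp (((Complex.arg z : ℂ) - ((q.2 : ℝ) : ℂ)) * Complex.I))| / Real.pi := by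
    apply Measurable.div _ measurable_const
    simp only [abs_eq_max_neg]
    exact hargRaw.max hargRaw.neg
  have hbase : Measurable fun q : ℝ × ℝ => max (1 - q.1)
      (|Complex.arg (Complex.exp (((Complex.arg z : ℂ) - ((q.2 : ℝ) : ℂ)) * Complex.I))| / Real.pi) :=
    (measurable_const.sub measurable_fst).max hargabs
  have hκmeas : Measurable κ := by
    rw [hκdef]
    exact (measurable_const.mul (hrp1.comp (measurable_const.sub measurable_fst))).mul
      (hrpneg.comp hbase)
  have hMmeas : Measurable M := hκmeas.indicator (hs.prod ht)
  -- inner integrability and bound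
  have hInt_inner : ∀ x : ℝ, Integrable (fun y => M (x, y)) volume ∧
      (∫ y, M (x, y)) ≤ s.indicator (fun _ => K) x := by
    intro x
    by_cases hx : x ∈ s
    · have hx1 : 0 < x := hx.1
      have hx3 : x ≤ 1 := hx.2.2
      have hsec : (fun y => M (x,y)) = t.indicator (fun y => κ (x,y)) := by
        funext y
        rw [hMdef]
        by_cases hy : y ∈ t
        · rw [Set.indicator_of_mem (Set.mem_prod.2 ⟨hx, hy⟩), Set.indicator_of_mem hy]
        · rw [Set.indicator_of_notMem (fun hm => hy (Set.mem_prod.1 hm).2),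
            Set.indicator_of_notMem hy]
      rcases eq_or_lt_of_le hx3 with hxeq | hxlt
      · -- x = 1
        have hone : (1:ℝ) - x = 0 := by rw [hxeq]; ring
        have hκ0 : ∀ y : ℝ, κ (x, y) = 0 := by
          intro y
          rw [hκdef]
          simp only [hone]
          rw [Real.zero_rpow (show p - 1 ≠ 0 by intro hc; linarith), mul_zero, zero_mul]
        have hzero : (fun y => M (x,y)) = fun _ => (0:ℝ) := by
          rw [hsec]
          funext y
          by_cases hy : y ∈ t
          · rw [Set.indicator_of_mem hy, hκ0]
          · exact Set.indicator_of_notMem hy _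
        rw [hzero, Set.indicator_of_mem hx]
        refine ⟨integrable_zero _ _ _, ?_⟩
        simp only [MeasureTheory.integral_const, smul_zero, smul_eq_mul, mul_zero]
        exact hK0.le
      · -- x < 1
        set δ : ℝ := 1 - x with hδdef
        have hδ0 : 0 < δ := by linarith
        have hδ1 : δ ≤ 1 := by linarith
        have hfactor : (fun y => κ (x,y)) = fun (y : ℝ) => (2 ^ (p-1) * (1 - x) ^ (p-1)) *
            (max (1 - x)
              (|Complex.arg (Complex.exp (((Complex.arg z : ℂ) - ((y : ℝ) : ℂ)) * Complex.I))| / Real.pi)) ^ (-p) := by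
          funext y; rw [hκdef]
        have hc1 : 0 ≤ 2 ^ (p-1) * (1 - x) ^ (p-1) :=
          mul_nonneg (Real.rpow_nonneg (by norm_num) _) (Real.rpow_nonneg (by linarith) _)
        have hbound : ∀ y : ℝ, ‖κ (x,y)‖ ≤ 2 ^ (p-1) * (1 - x) ^ (p-1) * (1-x) ^ (-p) := by
          intro y
          have hmax : (0:ℝ) < 1 - x := hδ0
          have hle : (1 - x) ≤ max (1 - x)
              (|Complex.arg (Complex.exp (((Complex.arg z : ℂ) - (y : ℂ)) * Complex.I))| / Real.pi) :=
            le_max_left _ _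
          have h1 : (max (1 - x)
              (|Complex.arg (Complex.exp (((Complex.arg z : ℂ) - (y : ℂ)) * Complex.I))| / Real.pi)) ^ (-p)
              ≤ (1-x) ^ (-p) := Real.rpow_le_rpow_of_nonpos hmax hle (by linarith)
          rw [Real.norm_eq_abs, _root_.abs_of_nonneg]
          · rw [hκdef]
            exact mul_le_mul_of_nonneg_left h1 hc1
          · rw [hκdef]
            apply mul_nonneg hc1
            exact Real.rpow_nonneg (le_trans hmax.le hle) _
        have hsm : AEStronglyMeasurable (fun y => κ (x,y)) volume :=
          (hκmeas.comp measurable_prodMk_left).aestronglyMeasurable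
        have hIntOn : IntegrableOn (fun y => κ (x,y)) t volume := by
          refine Measure.integrableOn_of_bounded
            (M := 2 ^ (p-1) * (1 - x) ^ (p-1) * (1-x) ^ (-p)) ?_ hsm ?_
          · rw [htdef, Real.volume_Ioo]
            exact ENNReal.ofReal_ne_top
          · exact ae_of_all _ (fun y => hbound y)
        have hint : Integrable (fun y => M (x,y)) volume := by
          rw [hsec]
          exact (integrable_indicator_iff ht).2 hIntOn
        refine ⟨hint, ?_⟩
        rw [Set.indicator_of_mem hx]
        have e1 : ∫ y, M (x,y) = ∫ y in t, κ (x,y) := by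
          rw [hsec, integral_indicator ht]
        rw [e1]
        have e2 : ∫ y in t, κ (x,y)
            = (2 ^ (p-1) * (1 - x) ^ (p-1)) * ∫ (y : ℝ) in t,
              (max (1 - x)
                (|Complex.arg (Complex.exp (((Complex.arg z : ℂ) - ((y:ℝ) : ℂ)) * Complex.I))| / Real.pi)) ^ (-p) := by
          rw [hfactor]
          exact integral_const_mul _ _
        rw [e2]
        calc (2 ^ (p-1) * (1 - x) ^ (p-1)) * ∫ (y : ℝ) in t,
              (max (1 - x)
                (|Complex.arg (Complex.exp (((Complex.arg z : ℂ) - ((y:ℝ) : ℂ)) * Complex.I))| / Real.pi)) ^ (-p)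
            ≤ (2 ^ (p-1) * (1 - x) ^ (p-1)) * (2 * Real.pi * (p / (p - 1)) * (1-x) ^ (1 - p)) := by
              apply mul_le_mul_of_nonneg_left _ hc1
              exact inner_integral_bound hp hδ0 hδ1 _
          _ = K := by
              rw [hKdef]
              rw [show 2 ^ (p-1) * (1 - x) ^ (p-1) * (2 * Real.pi * (p / (p - 1)) * (1-x) ^ (1 - p))
                = 2 ^ (p-1) * (2 * Real.pi * (p / (p - 1))) * ((1 - x) ^ (p-1) * (1-x) ^ (1 - p)) by ring]
              rw [← Real.rpow_add hδ0, show p - 1 + (1 - p) = (0:ℝ) by ring, Real.rpow_zero, mul_one]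
    · have hzero : (fun y => M (x,y)) = fun _ => (0:ℝ) := by
        funext y
        exact Set.indicator_of_notMem (fun hm => hx (Set.mem_prod.1 hm).1) _
      rw [hzero, Set.indicator_of_notMem hx]
      exact ⟨integrable_zero _ _ _, by simp⟩
  -- global integrability of M
  have hsK : Integrable (s.indicator fun _ => K) volume := by
    refine (integrable_indicator_iff hs).2 (integrableOn_const (ne_of_lt ?_))
    calc volume s ≤ volume (Icc (1-h) 1) := measure_mono inter_subset_right
      _ = ENNReal.ofReal (1 - (1-h)) := Real.volume_Icc
      _ < ⊤ := ENNReal.ofReal_lt_top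
  have hMint : Integrable M (volume.prod volume) := by
    refine (integrable_prod_iff hMmeas.aestronglyMeasurable).2 ⟨?_, ?_⟩
    · exact ae_of_all _ fun x => (hInt_inner x).1
    · have hnorm : ∀ x : ℝ, (∫ y, ‖M (x, y)‖) = ∫ y, M (x, y) := by
        intro x; congr 1; funext y
        rw [Real.norm_eq_abs, _root_.abs_of_nonneg (hMnonneg _)]
      refine Integrable.mono' (g := s.indicator fun _ => K) hsK ?_ ?_
      · exact (hMmeas.norm.aestronglyMeasurable).integral_prod_right'
      · refine ae_of_all _ fun x => ?_
        rw [hnorm x, Real.norm_eq_abs,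
          _root_.abs_of_nonneg (integral_nonneg fun y => hMnonneg _)]
        exact (hInt_inner x).2
  have hMint' : Integrable M volume := hMint
  have hIntM_val : (∫ q, M q) ≤ K * h := by
    calc ∫ q, M q = ∫ q, M q ∂(volume.prod volume) := rfl
      _ = ∫ x, ∫ y, M (x, y) := integral_prod _ hMint
      _ ≤ ∫ x, s.indicator (fun _ => K) x :=
          integral_mono hMint.integral_prod_left hsK fun x => (hInt_inner x).2
      _ = (volume s).toReal * K := by
          rw [integral_indicator_const _ hs, smul_eq_mul]; rfl
      _ ≤ h * K := by
          apply mul_le_mul_of_nonneg_right _ hK0.le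
          have h1 : volume s ≤ ENNReal.ofReal h := by
            calc volume s ≤ volume (Icc (1-h) 1) := measure_mono inter_subset_right
              _ = ENNReal.ofReal (1 - (1-h)) := Real.volume_Icc
              _ = ENNReal.ofReal h := by norm_num
          calc (volume s).toReal ≤ (ENNReal.ofReal h).toReal :=
                ENNReal.toReal_mono ENNReal.ofReal_ne_top h1
            _ = h := ENNReal.toReal_ofReal hh.le
      _ = K * h := mul_comm h K
  -- pointwise majorization
  have hTmeas : MeasurableSet (_root_.polarCoord.target) :=
    _root_.polarCoord.open_target.measurableSet
  have hmaj : ∀ q : ℝ × ℝ, (_root_.polarCoord.target.indicator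
      (fun q => q.1 • (S.indicator g) (Complex.polarCoord.symm q))) q ≤ M q := by
    intro q
    by_cases hq : q ∈ _root_.polarCoord.target
    · rw [Set.indicator_of_mem hq]
      rw [_root_.polarCoord_target] at hq
      have hq1 : 0 < q.1 := hq.1
      have hq2 : q.2 ∈ Ioo (-Real.pi) Real.pi := hq.2
      by_cases hqS : Complex.polarCoord.symm q ∈ S
      · rw [Set.indicator_of_mem hqS]
        have habs : ‖Complex.polarCoord.symm q‖ = q.1 := by
          rw [Complex.norm_polarCoord_symm, _root_.abs_of_pos hq1]
        have hW := hqS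
        rw [hSdef] at hW
        obtain ⟨hW1, hW2, -⟩ := hW
        rw [habs] at hW1 hW2
        have hqs : q ∈ s ×ˢ t := Set.mem_prod.2 ⟨⟨hq1, hW1, hW2⟩, hq2⟩
        rw [hMdef, Set.indicator_of_mem hqs]
        have hsymm := polarCoord_symm_eq q
        have hgnn : 0 ≤ g (Complex.polarCoord.symm q) := hgS _ (by rw [habs]; exact hW2)
        calc q.1 • g (Complex.polarCoord.symm q)
            = q.1 * g (Complex.polarCoord.symm q) := by rw [smul_eq_mul]
          _ ≤ 1 * g (Complex.polarCoord.symm q) := mul_le_mul_of_nonneg_right hW2 hgnn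
          _ = g (Complex.polarCoord.symm q) := one_mul _
          _ ≤ κ q := by
              rw [hgdef, hκdef]
              simp only
              rw [hsymm]
              exact pointwise_bound hp hz1 hq1 hW2
      · rw [Set.indicator_of_notMem hqS, smul_zero]; exact hMnonneg q
    · rw [Set.indicator_of_notMem hq]; exact hMnonneg q
  have hf0 : ∀ q : ℝ × ℝ, 0 ≤ (_root_.polarCoord.target.indicator
      (fun q => q.1 • (S.indicator g) (Complex.polarCoord.symm q))) q := by
    intro q
    apply Set.indicator_nonneg
    intro q' hq'
    rw [_root_.polarCoord_target] at hq'
    have hnn : 0 ≤ (S.indicator g) (Complex.polarCoord.symm q') := by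
      apply Set.indicator_nonneg
      intro l hl
      apply hgS
      rw [hSdef] at hl
      exact hl.2.1
    exact smul_nonneg (le_of_lt hq'.1) hnn
  -- final chain
  have hSm : MeasurableSet S := measurable_cWindowH hℓ1
  have e1 : (∫ l in S, g l) ≤ K * h := by
    calc ∫ l in S, g l = ∫ l, S.indicator g l := (integral_indicator hSm).symm
      _ = ∫ q in _root_.polarCoord.target,
            q.1 • (S.indicator g) (Complex.polarCoord.symm q) :=
          (Complex.integral_comp_polarCoord_symm (S.indicator g)).symm
      _ = ∫ q, (_root_.polarCoord.target.indicator
            (fun q => q.1 • (S.indicator g) (Complex.polarCoord.symm q))) q :=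
          (integral_indicator hTmeas).symm
      _ ≤ ∫ q, M q := integral_mono_of_nonneg (ae_of_all _ hf0) hMint' (ae_of_all _ hmaj)
      _ ≤ K * h := hIntM_val
  have hphi : cPhi p a ℓ h z = (1/h) * ∫ l in S, g l := rfl
  rw [hphi]
  calc (1/h) * ∫ l in S, g l ≤ (1/h) * (K * h) :=
        mul_le_mul_of_nonneg_left e1 (by positivity)
    _ = K := by field_simp


end AuxPhiBound
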